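/- Let q ≥ 1 be an integer and λ_∞ as in the context; write x_∞(θ) = λ_∞(e^{iθ}) (which is real for all real θ). Then there exists a constant L₂ > 0, depending only on q, such that x_∞(θ) ≤ -L₂·θ² for all θ ∈ [-π, π]. -/

import Mathlib

/-- Optimal centered finite-difference coefficients for the second derivative on
the stencil `{-q, …, q}`. -/
noncomputable def bCoef (q : ℕ) (k : ℤ) : ℝ :=
  if k = 0 then
    -∑ j ∈ Finset.Icc 1 q, 2 / (j : ℝ) ^ 2
  else
    -(2 * (-1 : ℝ) ^ k / (k : ℝ) ^ 2) *
      ((Nat.factorial q * Nat.factorial q : ℕ) : ℝ) /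
      ((Nat.factorial ((q : ℤ) + k).toNat * Nat.factorial ((q : ℤ) - k).toNat : ℕ) : ℝ)

lemma neg_one_zpow_int (k : ℤ) : (-1 : ℝ) ^ k = (-1 : ℝ) ^ k.natAbs := by
  rcases Int.even_or_odd k with h | h
  · rw [h.neg_one_zpow, (Int.natAbs_even.2 h).neg_one_pow]
  · rw [Odd.neg_one_zpow h, (Int.natAbs_odd.2 h).neg_one_pow]

lemma bCoef_neg (q : ℕ) (k : ℤ) : bCoef q (-k) = bCoef q k := by
  rcases eq_or_ne k 0 with rfl | hk
  · simp
  · unfold bCoef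
    rw [if_neg (neg_ne_zero.2 hk), if_neg hk]
    have h1 : (-1 : ℝ) ^ (-k) = (-1 : ℝ) ^ k := by
      rw [neg_one_zpow_int, neg_one_zpow_int k, Int.natAbs_neg]
    have h2 : ((-k : ℤ) : ℝ) ^ 2 = ((k : ℤ) : ℝ) ^ 2 := by push_cast; ring
    have h3 : ((q : ℤ) + -k) = ((q : ℤ) - k) := by ring
    have h4 : ((q : ℤ) - -k) = ((q : ℤ) + k) := by ring
    rw [h1, h2, h3, h4, Nat.mul_comm ((↑q + k).toNat.factorial)]

lemma coef_interior (n r : ℕ) (hn : 1 ≤ n) (e : ℝ) :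
    -(2 * e / (n:ℝ) ^ 2) * ((Nat.factorial (n+r+1) * Nat.factorial (n+r+1) : ℕ) : ℝ) /
        ((Nat.factorial (2*n+r+1) * Nat.factorial (r+1) : ℕ) : ℝ)
      = -(2 * e / (n:ℝ) ^ 2) * ((Nat.factorial (n+r) * Nat.factorial (n+r) : ℕ) : ℝ) /
            ((Nat.factorial (2*n+r) * Nat.factorial r : ℕ) : ℝ)
        - 2 / (((n+r+1 : ℕ):ℝ) ^ 2 * (Nat.choose (2*(n+r+1)) (n+r+1) : ℝ)) *
            (e * (Nat.choose (2*(n+r+1)) (2*n+r+1) : ℝ)) := by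
  have hA : (Nat.choose (2*(n+r+1)) (2*n+r+1) : ℝ) =
      ((2*(n+r+1)).factorial : ℝ) / ((2*n+r+1).factorial * (r+1).factorial) := by
    rw [eq_div_iff (by positivity)]
    have := Nat.choose_mul_factorial_mul_factorial (n := 2*(n+r+1)) (k := 2*n+r+1) (by omega)
    have h2 : 2*(n+r+1) - (2*n+r+1) = r + 1 := by omega
    rw [h2] at this
    push_cast [← this]; ring
  have hB : (Nat.choose (2*(n+r+1)) (n+r+1) : ℝ) =
      ((2*(n+r+1)).factorial : ℝ) / ((n+r+1).factorial * (n+r+1).factorial) := by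
    rw [eq_div_iff (by positivity)]
    have := Nat.choose_mul_factorial_mul_factorial (n := 2*(n+r+1)) (k := n+r+1) (by omega)
    have h2 : 2*(n+r+1) - (n+r+1) = n+r+1 := by omega
    rw [h2] at this
    push_cast [← this]; ring
  rw [hA, hB]
  have f1 : (Nat.factorial (2*n+r+1) : ℝ) = (2*n+r+1) * Nat.factorial (2*n+r) := by
    have : (2*n+r+1) = (2*n+r) + 1 := by ring
    rw [this, Nat.factorial_succ]; push_cast; ring
  have f2 : (Nat.factorial (r+1) : ℝ) = (r+1) * Nat.factorial r := by
    rw [Nat.factorial_succ]; push_cast; ring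
  have f3 : (Nat.factorial (n+r+1) : ℝ) = (n+r+1) * Nat.factorial (n+r) := by
    rw [Nat.factorial_succ]; push_cast; ring
  push_cast [f1, f2, f3]
  have hfac1 : (0:ℝ) < Nat.factorial (2*n+r) := by positivity
  have hfac2 : (0:ℝ) < Nat.factorial r := by positivity
  have hfac3 : (0:ℝ) < Nat.factorial (n+r) := by positivity
  have hfacG : (0:ℝ) < Nat.factorial (2*(n+r+1)) := by positivity
  have hn' : (0:ℝ) < n := by exact_mod_cast hn
  field_simp
  ring

lemma coef_step (q : ℕ) (hq : 1 ≤ q) (k : ℤ) (hk1 : -(q:ℤ) ≤ k) (hk2 : k ≤ q) :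
    bCoef q k = (if k.natAbs ≤ q - 1 then bCoef (q-1) k else 0)
      - 2 / ((q:ℝ)^2 * (Nat.choose (2*q) q : ℝ)) *
          ((-1:ℝ)^k * (Nat.choose (2*q) ((k + (q:ℤ)).toNat) : ℝ)) := by
  have hBpos : 0 < Nat.choose (2*q) q := Nat.choose_pos (by omega)
  -- reduce to k ≥ 0
  wlog hk0 : 0 ≤ k generalizing k
  · push_neg at hk0
    have h := this (-k) (by omega) (by omega) (by omega)
    rw [bCoef_neg, bCoef_neg] at h
    have e1 : (-1:ℝ) ^ (-k) = (-1:ℝ) ^ k := by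
      rw [neg_one_zpow_int, neg_one_zpow_int k, Int.natAbs_neg]
    have e2 : Nat.choose (2*q) ((-k + (q:ℤ)).toNat) = Nat.choose (2*q) ((k + (q:ℤ)).toNat) := by
      rw [show (-k + (q:ℤ)).toNat = 2*q - (k + (q:ℤ)).toNat from by omega,
        Nat.choose_symm (by omega)]
    rw [h, Int.natAbs_neg, e1, e2]
  -- k = n ≥ 0
  obtain ⟨n, rfl⟩ := Int.eq_ofNat_of_zero_le hk0
  have hnq : n ≤ q := by exact_mod_cast hk2
  rcases Nat.eq_zero_or_pos n with rfl | hn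
  · -- n = 0
    simp only [Int.natAbs_natCast, Nat.zero_le, if_pos, Nat.cast_zero]
    have htn : ((0:ℤ) + (q:ℤ)).toNat = q := by omega
    rw [htn]
    unfold bCoef
    rw [if_pos rfl, if_pos rfl]
    obtain ⟨p, rfl⟩ : ∃ p, q = p + 1 := ⟨q - 1, by omega⟩
    rw [Finset.sum_Icc_succ_top (by omega : 1 ≤ p + 1)]
    simp only [Nat.add_sub_cancel]
    have : (2:ℝ) / ((↑(p+1))^2 * (Nat.choose (2*(p+1)) (p+1) : ℝ)) *
        ((-1:ℝ)^(0:ℤ) * (Nat.choose (2*(p+1)) (p+1) : ℝ)) = 2 / (↑(p+1))^2 := by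
      have hB : (0:ℝ) < (Nat.choose (2*(p+1)) (p+1) : ℝ) := by exact_mod_cast hBpos
      have hp : (0:ℝ) < ((p:ℝ)+1) := by positivity
      rw [zpow_zero]
      push_cast
      field_simp
    rw [this]
    rw [if_pos (show Int.natAbs 0 ≤ p by simp)]
    push_cast
    ring
  · rcases eq_or_lt_of_le hnq with rfl | hlt
    · -- n = q
      have hif : ¬ ((n:ℤ).natAbs ≤ n - 1) := by simp [Int.natAbs_natCast]; omega
      rw [if_neg hif]
      unfold bCoef
      rw [if_neg (show ((n:ℤ)) ≠ 0 by omega)]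
      have ht1 : ((n:ℤ) + (n:ℤ)).toNat = 2*n := by omega
      have ht2 : ((n:ℤ) - (n:ℤ)).toNat = 0 := by omega
      rw [ht1, ht2]
      have hcs : Nat.choose (2*n) (2*n) = 1 := Nat.choose_self _
      rw [hcs]
      have hfac := Nat.choose_mul_factorial_mul_factorial (n := 2*n) (k := n) (by omega)
      have h2 : 2*n - n = n := by omega
      rw [h2] at hfac
      have hBpos' : (0:ℝ) < (Nat.choose (2*n) n : ℝ) := by exact_mod_cast hBpos
      have hfacpos : (0:ℝ) < (Nat.factorial n : ℝ) := by positivity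
      have hnpos : (0:ℝ) < (n:ℝ) := by exact_mod_cast hn
      have hzp : (-1:ℝ)^((n:ℕ):ℤ) = (-1:ℝ)^n := by rw [zpow_natCast]
      have hzc : (((n:ℕ):ℤ):ℝ) = (n:ℝ) := by push_cast; ring
      rw [hzp, hzc, Nat.factorial_zero]
      have hfacR : (Nat.choose (2*n) n : ℝ) * (Nat.factorial n : ℝ) * (Nat.factorial n : ℝ)
          = (Nat.factorial (2*n) : ℝ) := by exact_mod_cast hfac
      have he : (-1:ℝ)^n ≠ 0 := by
        rcases Nat.even_or_odd n with h | h
        · rw [h.neg_one_pow]; norm_num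
        · rw [h.neg_one_pow]; norm_num
      push_cast
      field_simp
      linear_combination (-(2 * (-1:ℝ)^n)) * hfacR
    · -- 1 ≤ n ≤ q - 1
      have hif : ((n:ℤ)).natAbs ≤ q - 1 := by simp [Int.natAbs_natCast]; omega
      rw [if_pos hif]
      obtain ⟨r, rfl⟩ : ∃ r, q = n + r + 1 := ⟨q - n - 1, by omega⟩
      unfold bCoef
      rw [if_neg (show ((n:ℤ)) ≠ 0 by omega), if_neg (show ((n:ℤ)) ≠ 0 by omega)]
      have ht1 : (((n+r+1:ℕ):ℤ) + (n:ℤ)).toNat = 2*n+r+1 := by omega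
      have ht2 : (((n+r+1:ℕ):ℤ) - (n:ℤ)).toNat = r+1 := by omega
      have ht3 : (((n+r+1-1:ℕ):ℤ) + (n:ℤ)).toNat = 2*n+r := by
        have : (n+r+1-1:ℕ) = n+r := by omega
        rw [this]; omega
      have ht4 : (((n+r+1-1:ℕ):ℤ) - (n:ℤ)).toNat = r := by
        have : (n+r+1-1:ℕ) = n+r := by omega
        rw [this]; omega
      have ht5 : ((n:ℤ) + ((n+r+1:ℕ):ℤ)).toNat = 2*n+r+1 := by omega
      rw [ht1, ht2, ht3, ht4, ht5]
      have ht6 : (n+r+1-1:ℕ) = n+r := by omega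
      rw [ht6]
      have hzc : (((n:ℕ):ℤ):ℝ) = (n:ℝ) := by push_cast; ring
      rw [hzc]
      exact coef_interior n r hn _

/-- The symbol `λ_∞(s) = Σ_{k=-q}^{q} b_k s^k` of the diffusion discretization. -/
noncomputable def lamInf (q : ℕ) (s : ℂ) : ℂ :=
  ∑ k ∈ Finset.Icc (-(q : ℤ)) (q : ℤ), (bCoef q k : ℂ) * s ^ k

lemma sum_Icc_to_range (q : ℕ) (f : ℤ → ℂ) :
    ∑ k ∈ Finset.Icc (-(q : ℤ)) (q : ℤ), f k
      = ∑ j ∈ Finset.range (2 * q + 1), f ((j : ℤ) - q) := by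
  refine Finset.sum_nbij' (fun k => (k + q).toNat) (fun j => (j : ℤ) - q) ?_ ?_ ?_ ?_ ?_
  · intro a ha; simp only [Finset.mem_Icc] at ha; simp only [Finset.mem_range]; omega
  · intro a ha; simp only [Finset.mem_range] at ha; simp only [Finset.mem_Icc]; omega
  · intro a ha; simp only [Finset.mem_Icc] at ha; omega
  · intro a ha; simp only [Finset.mem_range] at ha; omega
  · intro a ha; simp only [Finset.mem_Icc] at ha
    congr 1; omega

lemma neg_one_pow_inv_c (q : ℕ) : ((-1 : ℂ) ^ q)⁻¹ = (-1 : ℂ) ^ q := by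
  rcases Nat.even_or_odd q with h | h
  · rw [h.neg_one_pow]; norm_num
  · rw [h.neg_one_pow]; norm_num

lemma lamInf_step (q : ℕ) (hq : 1 ≤ q) (s : ℂ) (hs : s ≠ 0) :
    lamInf q s = lamInf (q-1) s
      - ((2 / ((q:ℝ)^2 * (Nat.choose (2*q) q : ℝ)) : ℝ) : ℂ) *
          ((-1:ℂ)^q * ((1 - s)^(2*q) * ((s^q)⁻¹))) := by
  classical
  have hCdef : True := trivial
  have hsmall : Finset.Icc (-((q-1:ℕ):ℤ)) ((q-1:ℕ):ℤ) ⊆ Finset.Icc (-(q:ℤ)) (q:ℤ) :=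
    Finset.Icc_subset_Icc (by omega) (by omega)
  have hlam' : lamInf (q-1) s
      = ∑ k ∈ Finset.Icc (-(q:ℤ)) (q:ℤ),
          (if k.natAbs ≤ q-1 then (bCoef (q-1) k : ℂ) * s ^ k else 0) := by
    rw [lamInf]
    calc ∑ k ∈ Finset.Icc (-((q-1:ℕ):ℤ)) ((q-1:ℕ):ℤ), (bCoef (q-1) k : ℂ) * s ^ k
        = ∑ k ∈ Finset.Icc (-((q-1:ℕ):ℤ)) ((q-1:ℕ):ℤ),
            (if k.natAbs ≤ q-1 then (bCoef (q-1) k : ℂ) * s ^ k else 0) := by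
          refine Finset.sum_congr rfl fun k hk => ?_
          simp only [Finset.mem_Icc] at hk
          rw [if_pos (by omega)]
      _ = _ := by
          refine Finset.sum_subset hsmall fun k hk hk2 => ?_
          simp only [Finset.mem_Icc, not_and, not_le] at hk hk2
          rw [if_neg (by simp only [Finset.mem_Icc, not_and_or, not_le] at hk2 ⊢; omega)]
  have hdiff : lamInf q s - lamInf (q-1) s
      = ∑ k ∈ Finset.Icc (-(q:ℤ)) (q:ℤ),
          (-((((2 / ((q:ℝ)^2 * (Nat.choose (2*q) q : ℝ))) * ((-1:ℝ)^k * (Nat.choose (2*q) ((k+(q:ℤ)).toNat) : ℝ))) : ℝ) : ℂ) * s ^ k) := by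
    rw [lamInf, hlam', ← Finset.sum_sub_distrib]
    refine Finset.sum_congr rfl fun k hk => ?_
    simp only [Finset.mem_Icc] at hk
    rw [coef_step q hq k hk.1 hk.2]
    split_ifs with h
    · push_cast
      ring
    · push_cast
      ring
  have hsum : ∑ k ∈ Finset.Icc (-(q:ℤ)) (q:ℤ),
        (-((((2 / ((q:ℝ)^2 * (Nat.choose (2*q) q : ℝ))) * ((-1:ℝ)^k * (Nat.choose (2*q) ((k+(q:ℤ)).toNat) : ℝ))) : ℝ) : ℂ) * s ^ k)
      = -((2 / ((q:ℝ)^2 * (Nat.choose (2*q) q : ℝ)) : ℝ) : ℂ) * ((-1:ℂ)^q * ((1 - s)^(2*q) * ((s^q)⁻¹))) := by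
    rw [sum_Icc_to_range q]
    have hterm : ∀ j ∈ Finset.range (2*q+1),
        (-((((2 / ((q:ℝ)^2 * (Nat.choose (2*q) q : ℝ))) * ((-1:ℝ)^((j:ℤ)-q) * (Nat.choose (2*q) ((((j:ℤ)-q)+(q:ℤ)).toNat) : ℝ))) : ℝ) : ℂ)
            * s ^ ((j:ℤ)-(q:ℤ)))
        = (-((2 / ((q:ℝ)^2 * (Nat.choose (2*q) q : ℝ)) : ℝ) : ℂ) * ((-1:ℂ)^q * (s^q)⁻¹)) * ((-s)^j * (Nat.choose (2*q) j : ℂ)) := by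
      intro j hj
      simp only [Finset.mem_range] at hj
      have ht : (((j:ℤ)-q)+(q:ℤ)).toNat = j := by omega
      rw [ht]
      have h1 : ((((-1:ℝ)^((j:ℤ)-q)) : ℝ) : ℂ) = (-1:ℂ)^j * (-1:ℂ)^q := by
        rw [Complex.ofReal_zpow]
        push_cast
        rw [zpow_sub₀ (by norm_num : (-1:ℂ) ≠ 0), zpow_natCast, zpow_natCast,
          div_eq_mul_inv, neg_one_pow_inv_c]
      have h2 : s ^ ((j:ℤ)-(q:ℤ)) = s^j * (s^q)⁻¹ := by
        rw [zpow_sub₀ hs, zpow_natCast, zpow_natCast, div_eq_mul_inv]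
      have h3 : (-s:ℂ)^j = (-1:ℂ)^j * s^j := by rw [neg_pow]
      push_cast [h1, h2, h3]
      ring
    rw [Finset.sum_congr rfl hterm, ← Finset.mul_sum]
    have hbin : ∑ j ∈ Finset.range (2*q+1), ((-s)^j * (Nat.choose (2*q) j : ℂ))
        = (1 - s)^(2*q) := by
      have := add_pow (-s) 1 (2*q)
      simp only [one_pow, mul_one] at this
      rw [show (1 - s) = (-s + 1) by ring, this]
    rw [hbin]
    ring
  rw [hsum] at hdiff
  linear_combination hdiff

lemma circle_pow (θ : ℝ) (m : ℕ) :
    (-1:ℂ)^m * ((1 - Complex.exp (θ * Complex.I))^(2*m) * ((Complex.exp (θ * Complex.I))^m)⁻¹)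
      = (((2 - 2*Real.cos θ : ℝ) : ℂ))^m := by
  set s := Complex.exp (θ * Complex.I) with hsdef
  have hs : s ≠ 0 := Complex.exp_ne_zero _
  have key : (-1:ℂ) * ((1 - s)^2 * s⁻¹) = ((2 - 2*Real.cos θ : ℝ) : ℂ) := by
    have hinv : s⁻¹ = Complex.exp (-(θ * Complex.I)) := by
      rw [hsdef, ← Complex.exp_neg]
    have hcos : s + s⁻¹ = 2 * Complex.cos θ := by
      rw [hinv, hsdef, Complex.cos]
      push_cast
      ring_nf
    have hre : (Complex.cos θ) = ((Real.cos θ : ℝ) : ℂ) := by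
      rw [Complex.ofReal_cos]
    field_simp
    push_cast
    rw [hre] at hcos
    field_simp at hcos
    linear_combination -hcos + 2 * s * hre
  calc (-1:ℂ)^m * ((1 - s)^(2*m) * (s^m)⁻¹)
      = ((-1:ℂ) * ((1 - s)^2 * s⁻¹))^m := by
        rw [mul_pow, mul_pow, pow_mul, inv_pow]
    _ = _ := by rw [key]

lemma lamInf_closed (θ : ℝ) : ∀ q : ℕ,
    lamInf q (Complex.exp (θ * Complex.I))
      = ((∑ m ∈ Finset.Icc 1 q,
          -(2 / ((m:ℝ)^2 * (Nat.choose (2*m) m : ℝ)) * (2 - 2*Real.cos θ)^m) : ℝ) : ℂ)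
  | 0 => by
      simp [lamInf, bCoef]
  | (q+1) => by
      rw [lamInf_step (q+1) (by omega) _ (Complex.exp_ne_zero _)]
      simp only [Nat.add_sub_cancel]
      rw [lamInf_closed θ q, circle_pow]
      rw [Finset.sum_Icc_succ_top (by omega : 1 ≤ q+1)]
      push_cast
      ring

/-- Quadratic upper bound on the diffusion symbol: there is `L₂ > 0`
(depending only on `q`) with `x_∞(θ) ≤ -L₂·θ²` on `[-π, π]`. -/
theorem lamInf_quadratic_bound (q : ℕ) (hq : 1 ≤ q) :
    ∃ L₂ > (0 : ℝ), ∀ θ ∈ Set.Icc (-Real.pi) Real.pi,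
      (lamInf q (Complex.exp (θ * Complex.I))).re ≤ -(L₂ * θ ^ 2) := by
  refine ⟨4 / Real.pi ^ 2, by positivity, fun θ hθ => ?_⟩
  rw [lamInf_closed θ q, Complex.ofReal_re]
  set u : ℝ := 2 - 2*Real.cos θ with hu
  have hu0 : 0 ≤ u := by
    have := Real.cos_le_one θ
    rw [hu]; linarith
  set f : ℕ → ℝ := fun m => -(2 / ((m:ℝ)^2 * (Nat.choose (2*m) m : ℝ)) * u^m) with hf
  have hstep1 : ∑ m ∈ Finset.Icc 1 q, f m ≤ f 1 := by
    have hsub : ({1} : Finset ℕ) ⊆ Finset.Icc 1 q := by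
      simp only [Finset.singleton_subset_iff, Finset.mem_Icc]; omega
    have h1 : ∑ m ∈ ({1} : Finset ℕ), -(f m) ≤ ∑ m ∈ Finset.Icc 1 q, -(f m) := by
      refine Finset.sum_le_sum_of_subset_of_nonneg hsub fun i hi _ => ?_
      simp only [Finset.mem_Icc] at hi
      have hc : (0:ℝ) < (Nat.choose (2*i) i : ℝ) := by
        exact_mod_cast Nat.choose_pos (by omega)
      have hi1 : (0:ℝ) < (i:ℝ) := by exact_mod_cast hi.1
      rw [hf]
      simp only [neg_neg]
      positivity
    simp only [Finset.sum_neg_distrib, Finset.sum_singleton] at h1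
    linarith
  have hf1 : f 1 = -u := by
    rw [hf]
    norm_num
  have hcos : Real.cos θ ≤ 1 - 2 / Real.pi^2 * θ^2 := by
    apply Real.cos_le_one_sub_mul_cos_sq
    rw [abs_le]
    exact ⟨hθ.1, hθ.2⟩
  have : -u ≤ -(4 / Real.pi^2 * θ^2) := by
    rw [hu]
    have h2 : 4 / Real.pi^2 * θ^2 = 2*(2/Real.pi^2*θ^2) := by ring
    linarith
  calc ∑ m ∈ Finset.Icc 1 q, f m ≤ f 1 := hstep1
    _ = -u := hf1
    _ ≤ -(4 / Real.pi^2 * θ^2) := this
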